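/- Let B₁, B₂ be invertible 2×2 real matrices with ‖B₁‖ < 1 and ‖B₂‖ < 1, let p ∈ [1/2, 1), q > 1, and let ε, κ > 0 be such that q·log(p)/((1−q)(ε+κ)) < 1 and such that for some integer k ≥ 1 one has lim_{n→∞} ‖B₁ⁿ B₂ᵏ B₁ⁿ‖^{1/(2n+k)} = ϱ̲(B₁, B₂) ≤ e^{−ε−κ}. Then 𝔯_q(B₁, B₂, p) ≤ q·log(p)/((1−q)(ε+κ)). -/

import Mathlib

open MeasureTheory Filter Topology

noncomputable section

/-- The operator norm of a `d × d` real matrix induced by the Euclidean norm on `ℝ^d`. -/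
noncomputable def opNorm {d : ℕ} (A : Matrix (Fin d) (Fin d) ℝ) : ℝ :=
  ‖Matrix.toEuclideanCLM (𝕜 := ℝ) (n := Fin d) A‖

/-- Removed from Mathlib; restated here for real square matrices. -/
theorem Matrix.isHermitian_transpose_mul_self {d : ℕ} (A : Matrix (Fin d) (Fin d) ℝ) :
    (A.transpose * A).IsHermitian := by
  simpa using Matrix.isHermitian_conjTranspose_mul_self A

/-- The singular values of a `d × d` real matrix, in decreasing order:
`singularValues A j` is `σ_{j+1}(A)`, the `(j+1)`-st largest singular value. -/
noncomputable def singularValues {d : ℕ} (A : Matrix (Fin d) (Fin d) ℝ) : Fin d → ℝ :=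
  fun j =>
    (fun i => Real.sqrt ((Matrix.isHermitian_transpose_mul_self A).eigenvalues i))
      (Tuple.sort (fun i => Real.sqrt ((Matrix.isHermitian_transpose_mul_self A).eigenvalues i))
        (Fin.rev j))

/-- The singular value function `φ^s(A)`. -/
noncomputable def svf {d : ℕ} (s : ℝ) (A : Matrix (Fin d) (Fin d) ℝ) : ℝ :=
  if (d : ℝ) ≤ s then |A.det| ^ (s / d)
  else ∏ i : Fin d,
    if (i : ℕ) < ⌊s⌋₊ then singularValues A i
    else if (i : ℕ) = ⌊s⌋₊ then singularValues A i ^ (s - (⌊s⌋₊ : ℝ))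
    else 1

/-- The product `A_{w 0} ⋯ A_{w (n-1)}` of matrices along the word `w`. -/
noncomputable def wordProd {d n : ℕ} (A : Fin 2 → Matrix (Fin d) (Fin d) ℝ)
    (w : Fin n → Fin 2) : Matrix (Fin d) (Fin d) ℝ :=
  (List.ofFn fun j => A (w j)).prod

/-- The probability vector `(p, 1-p)`. -/
noncomputable def pvec (p : ℝ) : Fin 2 → ℝ := ![p, 1 - p]

/-- `Σ_{i₁,…,i_n ∈ {1,2}} φ^s(A_{i₁}⋯A_{i_n})^{1−q} p_{i₁}^q ⋯ p_{i_n}^q`. -/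
noncomputable def Zsum (A : Fin 2 → Matrix (Fin 2) (Fin 2) ℝ) (p q s : ℝ) (n : ℕ) : ℝ :=
  ∑ w : Fin n → Fin 2,
    svf s (wordProd A w) ^ (1 - q) * ∏ j : Fin n, pvec p (w j) ^ q

/-- `𝔯_q(A₁, A₂, p)`. -/
noncomputable def rqDim (A : Fin 2 → Matrix (Fin 2) (Fin 2) ℝ) (p q : ℝ) : ℝ :=
  sSup {s : ℝ | 0 < s ∧ Summable (fun n : ℕ => Zsum A p q s (n + 1))}

/-- `R_q(A₁, A₂, p, s)`. -/
noncomputable def Rq (A : Fin 2 → Matrix (Fin 2) (Fin 2) ℝ) (p q s : ℝ) : ℝ :=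
  limUnder atTop (fun n : ℕ => (1 / (n : ℝ)) * Real.log (Zsum A p q s n))

/-- The minimum over all words of length `n` of the norm of the corresponding product. -/
noncomputable def minNormProd (A : Fin 2 → Matrix (Fin 2) (Fin 2) ℝ) (n : ℕ) : ℝ :=
  ⨅ w : Fin n → Fin 2, opNorm (wordProd A w)

/-- The lower spectral radius `ϱ̲(A₁, A₂)`. -/
noncomputable def lsr (A : Fin 2 → Matrix (Fin 2) (Fin 2) ℝ) : ℝ :=
  limUnder atTop (fun n : ℕ => minNormProd A n ^ (1 / (n : ℝ)))

/-- Pairs of invertible `2 × 2` matrices of operator norm less than one. -/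
def validPair : Set (Matrix (Fin 2) (Fin 2) ℝ × Matrix (Fin 2) (Fin 2) ℝ) :=
  {B | IsUnit B.1 ∧ IsUnit B.2 ∧ opNorm B.1 < 1 ∧ opNorm B.2 < 1}

/-- Rotation of `ℝ²` about the origin through angle `θ`. -/
noncomputable def rot (θ : ℝ) : Matrix (Fin 2) (Fin 2) ℝ :=
  !![Real.cos θ, -Real.sin θ; Real.sin θ, Real.cos θ]

/-- `(A₁, A₂)` is `(c, ε, λ)`-resistant. -/
def ResistantWith (c ε lam : ℝ) (A : Fin 2 → Matrix (Fin 2) (Fin 2) ℝ) : Prop :=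
  ∀ n : ℕ, 1 ≤ n → ∀ w : Fin n → Fin 2,
    ((Finset.univ.filter fun j => w j = 1).card : ℝ) ≤ ε * n →
    c * lam ^ n ≤ opNorm (wordProd A w)

/-- `(A₁, A₂)` is resistant. -/
def Resistant (A : Fin 2 → Matrix (Fin 2) (Fin 2) ℝ) : Prop :=
  ∃ c > (0:ℝ), ∃ ε > (0:ℝ), ∃ lam > (1:ℝ), ResistantWith c ε lam A

/-- `ℋ`: `2 × 2` real matrices of determinant one with two unequal real eigenvalues. -/
def Hset : Set (Matrix (Fin 2) (Fin 2) ℝ) :=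
  {H | H.det = 1 ∧ ∃ a b : ℝ, a ≠ b ∧ H.charpoly.IsRoot a ∧ H.charpoly.IsRoot b}

/-- `ℰ`: `2 × 2` real matrices of determinant one with non-real eigenvalues. -/
def Eset : Set (Matrix (Fin 2) (Fin 2) ℝ) :=
  {R | R.det = 1 ∧ ∀ x : ℝ, ¬ R.charpoly.IsRoot x}


/-- Abbreviation for the space of `2 × 2` real matrices. -/
abbrev Mat2 := Matrix (Fin 2) (Fin 2) ℝ


-- ===== auxiliary lemmas =====
set_option maxHeartbeats 2000000 in
set_option synthInstance.maxHeartbeats 1000000 in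
lemma aux_opNorm_mul_le {d : ℕ} (A B : Matrix (Fin d) (Fin d) ℝ) :
    opNorm (A * B) ≤ opNorm A * opNorm B := by
  unfold opNorm
  rw [_root_.map_mul]
  exact norm_mul_le _ _

set_option maxHeartbeats 2000000 in
set_option synthInstance.maxHeartbeats 1000000 in
lemma aux_opNorm_transpose {d : ℕ} (A : Matrix (Fin d) (Fin d) ℝ) :
    opNorm A.transpose = opNorm A := by
  unfold opNorm
  rw [← Matrix.conjTranspose_eq_transpose_of_trivial, ← Matrix.star_eq_conjTranspose, map_star]
  rw [ContinuousLinearMap.star_eq_adjoint]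
  exact LinearIsometryEquiv.norm_map ContinuousLinearMap.adjoint _

lemma aux_opNorm_nonneg {d : ℕ} (A : Matrix (Fin d) (Fin d) ℝ) : 0 ≤ opNorm A := norm_nonneg _

set_option maxHeartbeats 2000000 in
set_option synthInstance.maxHeartbeats 1000000 in
lemma aux_eig_le {d : ℕ} (A : Matrix (Fin d) (Fin d) ℝ) (i : Fin d) :
    (Matrix.isHermitian_transpose_mul_self A).eigenvalues i ≤ opNorm A ^ 2 := by
  set hA := Matrix.isHermitian_transpose_mul_self A
  set μ := hA.eigenvalues i
  set v := hA.eigenvectorBasis i with hv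
  have hv1 : ‖v‖ = 1 := hA.eigenvectorBasis.orthonormal.1 i
  have hmv : Matrix.toEuclideanCLM (𝕜 := ℝ) (A.transpose * A) v = μ • v := by
    apply (WithLp.equiv 2 _).injective
    simp only [Matrix.ofLp_toEuclideanCLM, Matrix.toLin'_apply]
    change Matrix.mulVec (A.transpose * A) v.ofLp = μ • v.ofLp
    exact hA.mulVec_eigenvectorBasis i
  have h1 : |μ| ≤ opNorm (A.transpose * A) := by
    have := (Matrix.toEuclideanCLM (𝕜 := ℝ) (A.transpose * A)).le_opNorm v
    rw [hmv, norm_smul, hv1, mul_one, mul_one, Real.norm_eq_abs] at this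
    exact this
  calc μ ≤ |μ| := le_abs_self _
  _ ≤ opNorm (A.transpose * A) := h1
  _ ≤ opNorm A.transpose * opNorm A := aux_opNorm_mul_le _ _
  _ = opNorm A ^ 2 := by rw [aux_opNorm_transpose]; ring

lemma aux_eig_pos {d : ℕ} {A : Matrix (Fin d) (Fin d) ℝ} (hA : IsUnit A) (i : Fin d) :
    0 < (Matrix.isHermitian_transpose_mul_self A).eigenvalues i := by
  rcases lt_or_eq_of_le (Matrix.eigenvalues_conjTranspose_mul_self_nonneg A i) with h | h
  · exact h
  exfalso
  have hdet := (Matrix.isHermitian_transpose_mul_self A).det_eq_prod_eigenvalues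
  have hdA : A.det ≠ 0 := ((Matrix.isUnit_iff_isUnit_det A).1 hA).ne_zero
  have hd0 : (A.conjTranspose * A).det ≠ 0 := by
    rw [Matrix.det_mul, Matrix.det_conjTranspose]
    exact mul_ne_zero (by simpa using hdA) hdA
  rw [Matrix.conjTranspose_eq_transpose_of_trivial, hdet] at hd0
  exact hd0 (Finset.prod_eq_zero (Finset.mem_univ i) (by simp; exact h.symm))

lemma aux_sv_nonneg {d : ℕ} (A : Matrix (Fin d) (Fin d) ℝ) (j : Fin d) :
    0 ≤ singularValues A j := Real.sqrt_nonneg _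

lemma aux_sv_le {d : ℕ} (A : Matrix (Fin d) (Fin d) ℝ) (j : Fin d) :
    singularValues A j ≤ opNorm A := by
  unfold singularValues
  calc Real.sqrt _ ≤ Real.sqrt (opNorm A ^ 2) := Real.sqrt_le_sqrt (aux_eig_le A _)
  _ = opNorm A := by rw [Real.sqrt_sq (aux_opNorm_nonneg A)]

lemma aux_sv_pos {d : ℕ} {A : Matrix (Fin d) (Fin d) ℝ} (hA : IsUnit A) (j : Fin d) :
    0 < singularValues A j := Real.sqrt_pos.2 (aux_eig_pos hA _)

lemma aux_opNorm_pos {A : Mat2} (hA : IsUnit A) : 0 < opNorm A :=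
  (aux_sv_pos hA 0).trans_le (aux_sv_le A 0)

lemma aux_abs_det_le {A : Mat2} : |A.det| ≤ opNorm A ^ 2 := by
  have hdet := (Matrix.isHermitian_transpose_mul_self A).det_eq_prod_eigenvalues
  have h1 : (A.conjTranspose * A).det = A.det ^ 2 := by
    rw [Matrix.det_mul, Matrix.det_conjTranspose]
    simp [sq]
  have h2 : A.det ^ 2 ≤ (opNorm A ^ 2) ^ 2 := by
    rw [← h1, Matrix.conjTranspose_eq_transpose_of_trivial, hdet]
    calc ∏ i, (Matrix.isHermitian_transpose_mul_self A).eigenvalues i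
        ≤ ∏ _i : Fin 2, opNorm A ^ 2 :=
          Finset.prod_le_prod (fun i _ => Matrix.eigenvalues_conjTranspose_mul_self_nonneg A i)
            (fun i _ => aux_eig_le A i)
    _ = (opNorm A ^ 2) ^ 2 := by simp [Fin.prod_univ_two, sq]
  calc |A.det| = Real.sqrt (A.det ^ 2) := (Real.sqrt_sq_eq_abs _).symm
  _ ≤ Real.sqrt ((opNorm A ^ 2) ^ 2) := Real.sqrt_le_sqrt h2
  _ = opNorm A ^ 2 := Real.sqrt_sq (by positivity)

lemma aux_svf_nonneg {d : ℕ} (s : ℝ) (A : Matrix (Fin d) (Fin d) ℝ) : 0 ≤ svf s A := by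
  unfold svf
  split_ifs with h
  · exact Real.rpow_nonneg (abs_nonneg _) _
  · refine Finset.prod_nonneg fun i _ => ?_
    split_ifs
    · exact aux_sv_nonneg A i
    · exact Real.rpow_nonneg (aux_sv_nonneg A i) _
    · exact zero_le_one

lemma aux_svf_pos {s : ℝ} {A : Mat2} (hs : 0 < s) (hA : IsUnit A) : 0 < svf s A := by
  have hdA : A.det ≠ 0 := ((Matrix.isUnit_iff_isUnit_det A).1 hA).ne_zero
  unfold svf
  split_ifs with h
  · exact Real.rpow_pos_of_pos (abs_pos.2 hdA) _
  · refine Finset.prod_pos fun i _ => ?_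
    split_ifs
    · exact aux_sv_pos hA i
    · exact Real.rpow_pos_of_pos (aux_sv_pos hA i) _
    · exact one_pos

lemma aux_svf_le {s : ℝ} {A : Mat2} (hs : 0 < s) (hA : IsUnit A) :
    svf s A ≤ opNorm A ^ s := by
  have hop : 0 < opNorm A := aux_opNorm_pos hA
  unfold svf
  split_ifs with h
  · have hle : |A.det| ^ (s / (2:ℕ)) ≤ (opNorm A ^ 2) ^ (s / (2:ℕ)) :=
      Real.rpow_le_rpow (abs_nonneg _) aux_abs_det_le (by positivity)
    refine hle.trans (le_of_eq ?_)
    rw [← Real.rpow_natCast (opNorm A) 2, ← Real.rpow_mul hop.le]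
    congr 1
    push_cast
    ring
  · push_neg at h
    have h2 : s < 2 := by exact_mod_cast h
    have hfl : ⌊s⌋₊ < 2 := by rw [Nat.floor_lt hs.le]; exact_mod_cast h2
    rw [Fin.prod_univ_two]
    have hfl2 : ⌊s⌋₊ = 0 ∨ ⌊s⌋₊ = 1 := by omega
    rcases hfl2 with hf | hf
    · simp only [hf, Fin.val_zero, Fin.val_one, Nat.cast_zero, sub_zero]
      norm_num
      exact Real.rpow_le_rpow (aux_sv_nonneg A 0) (aux_sv_le A 0) hs.le
    · have h1 : (1:ℝ) ≤ s := by
        have := Nat.floor_le hs.le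
        rw [hf] at this
        exact_mod_cast this
      simp only [hf, Fin.val_zero, Fin.val_one, Nat.cast_one]
      norm_num
      have hb : singularValues A 0 * singularValues A 1 ^ (s - 1)
          ≤ opNorm A * opNorm A ^ (s - 1) :=
        mul_le_mul (aux_sv_le A 0)
          (Real.rpow_le_rpow (aux_sv_nonneg A 1) (aux_sv_le A 1) (by linarith))
          (Real.rpow_nonneg (aux_sv_nonneg A 1) _) hop.le
      refine hb.trans (le_of_eq ?_)
      nth_rewrite 1 [← Real.rpow_one (opNorm A)]
      rw [← Real.rpow_add hop]
      ring_nf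

lemma aux_pvec_nonneg {p : ℝ} (hp0 : 0 ≤ p) (hp1 : p ≤ 1) (i : Fin 2) : 0 ≤ pvec p i := by
  fin_cases i <;> simp [pvec] <;> linarith

lemma aux_wordProd_append {d m n : ℕ} (A : Fin 2 → Matrix (Fin d) (Fin d) ℝ)
    (u : Fin m → Fin 2) (v : Fin n → Fin 2) :
    wordProd A (Fin.append u v) = wordProd A u * wordProd A v := by
  unfold wordProd
  have h : (fun j => A (Fin.append u v j)) = Fin.append (fun j => A (u j)) (fun j => A (v j)) := by
    funext j
    cases j using Fin.addCases with
    | left i => rw [Fin.append_left, Fin.append_left]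
    | right i => rw [Fin.append_right, Fin.append_right]
  rw [h, List.ofFn_fin_append, List.prod_append]

lemma aux_wordProd_const {d n : ℕ} (A : Fin 2 → Matrix (Fin d) (Fin d) ℝ) (c : Fin 2) :
    wordProd A (fun _ : Fin n => c) = A c ^ n := by
  unfold wordProd
  rw [show (List.ofFn fun j : Fin n => A ((fun _ => c) j)) = List.ofFn fun _ : Fin n => A c from rfl,
    List.ofFn_const, List.prod_replicate]

lemma aux_wordProd_word (B₁ B₂ : Mat2) (n k : ℕ) :
    wordProd ![B₁, B₂]
      (Fin.append (Fin.append (fun _ : Fin n => (0:Fin 2)) fun _ : Fin k => 1)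
        fun _ : Fin n => 0) = B₁ ^ n * B₂ ^ k * B₁ ^ n := by
  rw [aux_wordProd_append, aux_wordProd_append, aux_wordProd_const, aux_wordProd_const]
  simp

lemma aux_pvec_prod (p q : ℝ) (n k : ℕ) :
    (∏ j : Fin (n + k + n),
      pvec p ((Fin.append (Fin.append (fun _ : Fin n => (0:Fin 2)) fun _ : Fin k => 1)
        fun _ : Fin n => 0) j) ^ q)
      = ((p ^ q) ^ n * ((1 - p) ^ q) ^ k) * (p ^ q) ^ n := by
  rw [Fin.prod_univ_add]
  simp only [Fin.append_left, Fin.append_right]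
  rw [Fin.prod_univ_add]
  simp only [Fin.append_left, Fin.append_right]
  simp [pvec, Finset.prod_const]

-- ===== main theorem =====
/-- If `q·log p/((1−q)(ε+κ)) < 1` and for some `k ≥ 1` one has
`lim_n ‖B₁ⁿB₂ᵏB₁ⁿ‖^{1/(2n+k)} = ϱ̲(B₁,B₂) ≤ e^{−ε−κ}`, then
`𝔯_q(B₁,B₂,p) ≤ q·log p/((1−q)(ε+κ))`. -/
theorem stmt18 (B₁ B₂ : Mat2) (h1 : IsUnit B₁) (h2 : IsUnit B₂)
    (hn1 : opNorm B₁ < 1) (hn2 : opNorm B₂ < 1) (p q ε κ : ℝ)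
    (hp : p ∈ Set.Ico (1 / 2 : ℝ) 1) (hq : 1 < q) (hε : 0 < ε) (hκ : 0 < κ)
    (hlt : q * Real.log p / ((1 - q) * (ε + κ)) < 1)
    (hk : ∃ k : ℕ, 1 ≤ k ∧
      Filter.Tendsto
          (fun n : ℕ => opNorm (B₁ ^ n * B₂ ^ k * B₁ ^ n) ^ (1 / (2 * (n : ℝ) + k)))
          Filter.atTop (𝓝 (lsr ![B₁, B₂])) ∧
      lsr ![B₁, B₂] ≤ Real.exp (-ε - κ)) :
    rqDim ![B₁, B₂] p q ≤ q * Real.log p / ((1 - q) * (ε + κ)) := by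
  obtain ⟨k, hk1, hlim, hρ⟩ := hk
  obtain ⟨hphalf, hp1⟩ := hp
  have hp0 : (0:ℝ) < p := lt_of_lt_of_le (by norm_num) hphalf
  have h1p : (0:ℝ) < 1 - p := by linarith
  have hlogp : Real.log p < 0 := Real.log_neg hp0 hp1
  have hq0 : (0:ℝ) < q := lt_trans one_pos hq
  have hD : 0 < (q - 1) * (ε + κ) := mul_pos (by linarith) (by linarith)
  have hne2 : (1 - q) * (ε + κ) ≠ 0 :=
    ne_of_lt (mul_neg_of_neg_of_pos (by linarith) (by linarith))
  have ht0 : 0 ≤ q * Real.log p / ((1 - q) * (ε + κ)) :=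
    by rw [div_nonneg_iff]
       exact Or.inr ⟨by nlinarith, le_of_lt (mul_neg_of_neg_of_pos (by linarith) (by linarith))⟩
  apply Real.sSup_le _ ht0
  rintro s ⟨hs, hsum⟩
  by_contra hst
  push_neg at hst
  have htD : q * Real.log p / ((1 - q) * (ε + κ)) * ((q - 1) * (ε + κ))
      = -(q * Real.log p) := by
    rw [div_mul_eq_mul_div, div_eq_iff hne2]
    ring
  set η := s * ((q - 1) * (ε + κ)) + q * Real.log p with hη
  have hη0 : 0 < η := by nlinarith [mul_pos (sub_pos.2 hst) hD]
  have hsq : 0 < s * (q - 1) := mul_pos hs (by linarith)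
  set δ := η / (2 * (s * (q - 1))) with hδ
  have hδ0 : 0 < δ := div_pos hη0 (by linarith)
  set X : ℕ → ℝ := fun n =>
    (-ε - κ + δ) * (2 * (n:ℝ) + k) * s * (1 - q)
      + ((2 * (n:ℝ)) * (Real.log p * q) + (k:ℝ) * (Real.log (1 - p) * q)) with hX
  have hXn : ∀ n : ℕ, X n = X 0 + n * η := by
    intro n
    simp only [hX]
    rw [hδ, hη]
    have hne3 : 2 * (s * (q - 1)) ≠ 0 := by positivity
    have hq1 : q - 1 ≠ 0 := by linarith
    have hs1 : s ≠ 0 := hs.ne'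
    field_simp
    ring
  have hexp : Real.exp (-ε - κ) < Real.exp (-ε - κ + δ) := Real.exp_lt_exp.2 (by linarith)
  have hev := hlim.eventually_lt_const (lt_of_le_of_lt hρ hexp)
  have hz0 : Tendsto (fun n : ℕ => Zsum ![B₁, B₂] p q s (n + k + n)) atTop (𝓝 0) := by
    have ha : Tendsto (fun n : ℕ => Zsum ![B₁, B₂] p q s (n + 1)) atTop (𝓝 0) :=
      hsum.tendsto_atTop_zero
    have hb : Tendsto (fun n : ℕ => n + (k - 1) + n) atTop atTop :=
      tendsto_atTop_mono (fun n => by simp only [id_eq]; omega) tendsto_id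
    have h3 : ∀ n : ℕ, n + (k - 1) + n + 1 = n + k + n := fun n => by omega
    exact Filter.Tendsto.congr
      (fun n => by simp only [Function.comp_apply]; congr 1; omega) (ha.comp hb)
  have key : ∀ᶠ n : ℕ in atTop, Real.exp (X 0) ≤ Zsum ![B₁, B₂] p q s (n + k + n) := by
    refine hev.mono fun n hn => ?_
    set W := B₁ ^ n * B₂ ^ k * B₁ ^ n with hW
    have hWu : IsUnit W := ((h1.pow n).mul (h2.pow k)).mul (h1.pow n)
    have hk1' : (1:ℝ) ≤ (k:ℝ) := by exact_mod_cast hk1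
    have hc : (0:ℝ) < 2 * (n:ℝ) + k := by
      have : (0:ℝ) ≤ (n:ℝ) := Nat.cast_nonneg n
      linarith
    have hWn : opNorm W ≤ Real.exp ((-ε - κ + δ) * (2 * (n:ℝ) + k)) := by
      have h' := Real.rpow_le_rpow (Real.rpow_nonneg (aux_opNorm_nonneg W) _) hn.le hc.le
      rw [← Real.rpow_mul (aux_opNorm_nonneg W), one_div_mul_cancel hc.ne', Real.rpow_one,
        ← Real.exp_mul] at h'
      exact h'
    have hsvf : svf s W ≤ Real.exp ((-ε - κ + δ) * (2 * (n:ℝ) + k) * s) := by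
      refine (aux_svf_le hs hWu).trans ?_
      calc opNorm W ^ s ≤ Real.exp ((-ε - κ + δ) * (2 * (n:ℝ) + k)) ^ s :=
            Real.rpow_le_rpow (aux_opNorm_nonneg W) hWn hs.le
      _ = Real.exp ((-ε - κ + δ) * (2 * (n:ℝ) + k) * s) := (Real.exp_mul _ _).symm
    have hterm : Real.exp ((-ε - κ + δ) * (2 * (n:ℝ) + k) * s * (1 - q))
        ≤ svf s W ^ (1 - q) := by
      have h' := Real.rpow_le_rpow_of_nonpos (aux_svf_pos hs hWu) hsvf (by linarith : 1 - q ≤ 0)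
      rwa [← Real.exp_mul] at h'
    set w₀ : Fin (n + k + n) → Fin 2 :=
      Fin.append (Fin.append (fun _ : Fin n => (0:Fin 2)) fun _ : Fin k => 1)
        fun _ : Fin n => 0 with hw₀
    have hP : (∏ j : Fin (n + k + n), pvec p (w₀ j) ^ q)
        = Real.exp ((2 * (n:ℝ)) * (Real.log p * q) + (k:ℝ) * (Real.log (1 - p) * q)) := by
      rw [hw₀, aux_pvec_prod, Real.rpow_def_of_pos hp0, Real.rpow_def_of_pos h1p,
        ← Real.exp_nat_mul, ← Real.exp_nat_mul, ← Real.exp_add, ← Real.exp_add]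
      congr 1
      push_cast
      ring
    have hsum_ge : svf s (wordProd ![B₁, B₂] w₀) ^ (1 - q) * ∏ j : Fin (n + k + n), pvec p (w₀ j) ^ q
        ≤ Zsum ![B₁, B₂] p q s (n + k + n) := by
      unfold Zsum
      refine Finset.single_le_sum (f := fun w : Fin (n + k + n) → Fin 2 =>
        svf s (wordProd ![B₁, B₂] w) ^ (1 - q) * ∏ j : Fin (n + k + n), pvec p (w j) ^ q)
        (fun w _ => ?_) (Finset.mem_univ w₀)
      exact mul_nonneg (Real.rpow_nonneg (aux_svf_nonneg _ _) _)
        (Finset.prod_nonneg fun j _ => Real.rpow_nonneg (aux_pvec_nonneg hp0.le hp1.le _) _)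
    rw [hw₀, aux_wordProd_word, ← hw₀, ← hW] at hsum_ge
    refine le_trans ?_ hsum_ge
    rw [hP]
    calc Real.exp (X 0) ≤ Real.exp (X n) := by
          rw [hXn n]
          exact Real.exp_le_exp.2 (by nlinarith [Nat.cast_nonneg (α := ℝ) n, hη0.le])
    _ ≤ Real.exp ((-ε - κ + δ) * (2 * (n:ℝ) + k) * s * (1 - q)
          + ((2 * (n:ℝ)) * (Real.log p * q) + (k:ℝ) * (Real.log (1 - p) * q))) := by
          simp only [hX]
          exact le_rfl
    _ ≤ _ := by
          rw [Real.exp_add]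
          exact mul_le_mul_of_nonneg_right hterm (Real.exp_nonneg _)
  have hle : Real.exp (X 0) ≤ 0 := ge_of_tendsto hz0 key
  exact absurd hle (not_le.2 (Real.exp_pos _))
end
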